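/- Suppose R ⊆ [0,1]^E is compact, convex, contains M_G, and every extreme point of R lies in M_G (an integral relaxation oracle; equivalently R = conv(M_G)). Then the projection onto the (ρ,y)-coordinates of the set of triples (ρ,y,x) in the perspective system with x ∈ [0,1]^V equals conv(C_G), the convex hull of the choice probability set. (Theorem 1, local sharpness part.) -/

import Mathlib

open Finset

/-- A vector is binary if each coordinate is 0 or 1. -/
def IsBinaryVec {α : Type*} (x : α → ℝ) : Prop := ∀ i, x i = 0 ∨ x i = 1

variable {N : ℕ}

/-- The denominator `D(x) = 1 + Σ_{c∈E} v_c ∏_{i∈c} x_i`. -/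
noncomputable def Dx (E : Finset (Finset (Fin N))) (v : Finset (Fin N) → ℝ)
    (x : Fin N → ℝ) : ℝ :=
  1 + ∑ c ∈ E, v c * ∏ i ∈ c, x i

/-- The choice probability set `C_G`. -/
def choiceSet (E : Finset (Finset (Fin N))) (v : Finset (Fin N) → ℝ) :
    Set (ℝ × ({e // e ∈ E} → ℝ)) :=
  {p | ∃ x : Fin N → ℝ, IsBinaryVec x ∧ p.1 = 1 / Dx E v x ∧
      ∀ e : {e // e ∈ E}, p.2 e = (∏ i ∈ e.1, x i) / Dx E v x}

/-- The monomial set `M_G`. -/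
def monoSet (E : Finset (Finset (Fin N))) : Set ({e // e ∈ E} → ℝ) :=
  {z | ∃ x : Fin N → ℝ, IsBinaryVec x ∧ ∀ e : {e // e ∈ E}, z e = ∏ i ∈ e.1, x i}

/-- An exact relaxation oracle: `R ⊆ [0,1]^E`, `M_G ⊆ R`, and every `z ∈ R` with binary
singleton coordinates is the corresponding monomial vector. -/
def IsExactOracle (E : Finset (Finset (Fin N)))
    (hsing : ∀ i : Fin N, ({i} : Finset (Fin N)) ∈ E)
    (R : Set ({e // e ∈ E} → ℝ)) : Prop :=
  (∀ z ∈ R, ∀ e : {e // e ∈ E}, z e ∈ Set.Icc (0 : ℝ) 1) ∧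
  monoSet E ⊆ R ∧
  (∀ z ∈ R, (∀ i : Fin N, z ⟨{i}, hsing i⟩ = 0 ∨ z ⟨{i}, hsing i⟩ = 1) →
    ∀ e : {e // e ∈ E}, z e = ∏ i ∈ e.1, z ⟨{i}, hsing i⟩)

/-- `L_i(ρ,y)`. -/
noncomputable def Lb (E : Finset (Finset (Fin N)))
    (hsing : ∀ i : Fin N, ({i} : Finset (Fin N)) ∈ E)
    (v : Finset (Fin N) → ℝ) (ρ : ℝ) (y : {e // e ∈ E} → ℝ) (i : Fin N) : ℝ :=
  y ⟨{i}, hsing i⟩ +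
    ∑ e ∈ E.attach, (if i ∈ e.1 then v e.1 * y e
      else v e.1 * max 0 (y ⟨{i}, hsing i⟩ + y e - ρ))

/-- `U_i(ρ,y)`. -/
noncomputable def Ub (E : Finset (Finset (Fin N)))
    (hsing : ∀ i : Fin N, ({i} : Finset (Fin N)) ∈ E)
    (v : Finset (Fin N) → ℝ) (ρ : ℝ) (y : {e // e ∈ E} → ℝ) (i : Fin N) : ℝ :=
  y ⟨{i}, hsing i⟩ +
    ∑ e ∈ E.attach, (if i ∈ e.1 then v e.1 * y e
      else v e.1 * min (y ⟨{i}, hsing i⟩) (y e))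

/-- The perspective system. -/
noncomputable def persSystem (E : Finset (Finset (Fin N)))
    (hsing : ∀ i : Fin N, ({i} : Finset (Fin N)) ∈ E)
    (v : Finset (Fin N) → ℝ) (R : Set ({e // e ∈ E} → ℝ)) :
    Set (ℝ × ({e // e ∈ E} → ℝ) × (Fin N → ℝ)) :=
  {p | 0 ≤ p.1 ∧ (∃ z ∈ R, p.2.1 = p.1 • z) ∧
      p.1 + ∑ e ∈ E.attach, v e.1 * p.2.1 e = 1 ∧
      ∀ i : Fin N, Lb E hsing v p.1 p.2.1 i ≤ p.2.2 i ∧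
        p.2.2 i ≤ Ub E hsing v p.1 p.2.1 i}


lemma max0_combo {l m s t : ℝ} (hl : 0 ≤ l) (hm : 0 ≤ m) :
    max 0 (l * s + m * t) ≤ l * max 0 s + m * max 0 t := by
  apply max_le
  · have h1 := le_max_left (0:ℝ) s
    have h2 := le_max_left (0:ℝ) t
    nlinarith
  · have h1 := le_max_right (0:ℝ) s
    have h2 := le_max_right (0:ℝ) t
    nlinarith

lemma min_combo {l m a b c d : ℝ} (hl : 0 ≤ l) (hm : 0 ≤ m) :
    l * min a b + m * min c d ≤ min (l * a + m * c) (l * b + m * d) := by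
  apply le_min <;>
    nlinarith [min_le_left a b, min_le_right a b, min_le_left c d, min_le_right c d]

lemma prod_binary {x : Fin N → ℝ} (hx : IsBinaryVec x) (e : Finset (Fin N)) :
    (∏ i ∈ e, x i) = 0 ∨ (∏ i ∈ e, x i) = 1 := by
  classical
  by_cases h : ∀ i ∈ e, x i = 1
  · exact Or.inr (Finset.prod_eq_one h)
  · push_neg at h
    obtain ⟨i, hi, hxi⟩ := h
    exact Or.inl (Finset.prod_eq_zero hi ((hx i).resolve_right hxi))

lemma Dx_pos {E : Finset (Finset (Fin N))} {v : Finset (Fin N) → ℝ}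
    (hv : ∀ e ∈ E, 0 < v e) {x : Fin N → ℝ} (hx : IsBinaryVec x) :
    0 < Dx E v x := by
  have h : 0 ≤ ∑ c ∈ E, v c * ∏ i ∈ c, x i := by
    apply Finset.sum_nonneg
    intro c hc
    exact mul_nonneg (hv c hc).le
      (Finset.prod_nonneg fun i _ => by rcases hx i with h | h <;> simp [h])
  unfold Dx; linarith

lemma max0_eq {D a b : ℝ} (hD : 0 < D) (ha : a = 0 ∨ a = 1) (hb : b = 0 ∨ b = 1) :
    max 0 (a / D + b / D - 1 / D) = a * b / D := by
  have h1 : 0 < 1 / D := by positivity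
  rcases ha with rfl | rfl <;> rcases hb with rfl | rfl <;>
    simp only [zero_div, zero_add, add_zero, zero_sub, zero_mul, mul_zero, one_mul, mul_one,
      sub_self] <;>
    [ (rw [max_eq_left (by linarith)]);
      (rw [max_eq_left le_rfl]);
      (rw [max_eq_left le_rfl]);
      skip ]
  · rw [show 1/D + 1/D - 1/D = 1/D by ring, max_eq_right h1.le]

lemma min0_eq {D a b : ℝ} (hD : 0 < D) (ha : a = 0 ∨ a = 1) (hb : b = 0 ∨ b = 1) :
    min (a / D) (b / D) = a * b / D := by
  have h1 : 0 < 1 / D := by positivity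
  rcases ha with rfl | rfl <;> rcases hb with rfl | rfl <;>
    simp only [zero_div, zero_mul, mul_zero, one_mul, mul_one] <;>
    [ simp; (exact min_eq_left h1.le); (exact min_eq_right h1.le); simp ]

lemma xi_mul_prod {x : Fin N → ℝ} (hx : IsBinaryVec x) {i : Fin N} {e : Finset (Fin N)}
    (hie : i ∈ e) : x i * ∏ j ∈ e, x j = ∏ j ∈ e, x j := by
  rcases hx i with h | h
  · rw [h, Finset.prod_eq_zero hie h, mul_zero]
  · rw [h, one_mul]

lemma vertex_sum (E : Finset (Finset (Fin N))) (v : Finset (Fin N) → ℝ)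
    (hv : ∀ e ∈ E, 0 < v e) {x : Fin N → ℝ} (hx : IsBinaryVec x) (i : Fin N) :
    ∑ e ∈ E.attach, v e.1 * (x i * ∏ j ∈ e.1, x j) / Dx E v x
      = x i * (Dx E v x - 1) / Dx E v x := by
  rw [← Finset.sum_div]
  congr 1
  rw [Finset.sum_attach E (fun c => v c * (x i * ∏ j ∈ c, x j)),
    show Dx E v x - 1 = ∑ c ∈ E, v c * ∏ j ∈ c, x j by unfold Dx; ring,
    Finset.mul_sum]
  exact Finset.sum_congr rfl fun c _ => by ring

lemma Lb_vertex (E : Finset (Finset (Fin N)))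
    (hsing : ∀ i : Fin N, ({i} : Finset (Fin N)) ∈ E)
    (v : Finset (Fin N) → ℝ) (hv : ∀ e ∈ E, 0 < v e)
    {x : Fin N → ℝ} (hx : IsBinaryVec x) (i : Fin N) :
    Lb E hsing v (1 / Dx E v x) (fun e => (∏ j ∈ e.1, x j) / Dx E v x) i = x i := by
  have hD := Dx_pos hv hx
  unfold Lb
  simp only [Finset.prod_singleton]
  have hterm : ∀ e ∈ E.attach,
      (if i ∈ e.1 then v e.1 * ((∏ j ∈ e.1, x j) / Dx E v x)
        else v e.1 * max 0 (x i / Dx E v x + (∏ j ∈ e.1, x j) / Dx E v x - 1 / Dx E v x))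
      = v e.1 * (x i * ∏ j ∈ e.1, x j) / Dx E v x := by
    intro e _
    by_cases hie : i ∈ e.1
    · rw [if_pos hie, xi_mul_prod hx hie]
      ring
    · rw [if_neg hie, max0_eq hD (hx i) (prod_binary hx e.1)]
      ring
  rw [Finset.sum_congr rfl hterm, vertex_sum E v hv hx i]
  field_simp
  ring

lemma Ub_vertex (E : Finset (Finset (Fin N)))
    (hsing : ∀ i : Fin N, ({i} : Finset (Fin N)) ∈ E)
    (v : Finset (Fin N) → ℝ) (hv : ∀ e ∈ E, 0 < v e)
    {x : Fin N → ℝ} (hx : IsBinaryVec x) (i : Fin N) :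
    Ub E hsing v (1 / Dx E v x) (fun e => (∏ j ∈ e.1, x j) / Dx E v x) i = x i := by
  have hD := Dx_pos hv hx
  unfold Ub
  simp only [Finset.prod_singleton]
  have hterm : ∀ e ∈ E.attach,
      (if i ∈ e.1 then v e.1 * ((∏ j ∈ e.1, x j) / Dx E v x)
        else v e.1 * min (x i / Dx E v x) ((∏ j ∈ e.1, x j) / Dx E v x))
      = v e.1 * (x i * ∏ j ∈ e.1, x j) / Dx E v x := by
    intro e _
    by_cases hie : i ∈ e.1
    · rw [if_pos hie, xi_mul_prod hx hie]
      ring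
    · rw [if_neg hie, min0_eq hD (hx i) (prod_binary hx e.1)]
      ring
  rw [Finset.sum_congr rfl hterm, vertex_sum E v hv hx i]
  field_simp
  ring

lemma Lb_combo (E : Finset (Finset (Fin N)))
    (hsing : ∀ i : Fin N, ({i} : Finset (Fin N)) ∈ E)
    (v : Finset (Fin N) → ℝ) (hv : ∀ e ∈ E, 0 < v e)
    {a b ρ1 ρ2 : ℝ} {y1 y2 : {e // e ∈ E} → ℝ} (ha : 0 ≤ a) (hb : 0 ≤ b) (i : Fin N) :
    Lb E hsing v (a * ρ1 + b * ρ2) (a • y1 + b • y2) i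
      ≤ a * Lb E hsing v ρ1 y1 i + b * Lb E hsing v ρ2 y2 i := by
  unfold Lb
  simp only [Pi.add_apply, Pi.smul_apply, smul_eq_mul]
  have hmain : ∑ e ∈ E.attach,
      (if i ∈ e.1 then v e.1 * (a * y1 e + b * y2 e)
        else v e.1 * max 0 (a * y1 ⟨{i}, hsing i⟩ + b * y2 ⟨{i}, hsing i⟩
          + (a * y1 e + b * y2 e) - (a * ρ1 + b * ρ2)))
      ≤ ∑ e ∈ E.attach,
        (a * (if i ∈ e.1 then v e.1 * y1 e else v e.1 * max 0 (y1 ⟨{i}, hsing i⟩ + y1 e - ρ1))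
          + b * (if i ∈ e.1 then v e.1 * y2 e
            else v e.1 * max 0 (y2 ⟨{i}, hsing i⟩ + y2 e - ρ2))) := by
    apply Finset.sum_le_sum
    intro e _
    by_cases hie : i ∈ e.1
    · simp only [if_pos hie]; nlinarith [hv e.1 e.2]
    · simp only [if_neg hie]
      have harg : a * y1 ⟨{i}, hsing i⟩ + b * y2 ⟨{i}, hsing i⟩
          + (a * y1 e + b * y2 e) - (a * ρ1 + b * ρ2)
          = a * (y1 ⟨{i}, hsing i⟩ + y1 e - ρ1) + b * (y2 ⟨{i}, hsing i⟩ + y2 e - ρ2) := by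
        ring
      rw [harg]
      calc v e.1 * max 0 (a * (y1 ⟨{i}, hsing i⟩ + y1 e - ρ1)
              + b * (y2 ⟨{i}, hsing i⟩ + y2 e - ρ2))
          ≤ v e.1 * (a * max 0 (y1 ⟨{i}, hsing i⟩ + y1 e - ρ1)
              + b * max 0 (y2 ⟨{i}, hsing i⟩ + y2 e - ρ2)) :=
            mul_le_mul_of_nonneg_left (max0_combo ha hb) (hv e.1 e.2).le
        _ = a * (v e.1 * max 0 (y1 ⟨{i}, hsing i⟩ + y1 e - ρ1))
              + b * (v e.1 * max 0 (y2 ⟨{i}, hsing i⟩ + y2 e - ρ2)) := by ring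
  rw [Finset.sum_add_distrib, ← Finset.mul_sum, ← Finset.mul_sum] at hmain
  linarith [hmain]

lemma Ub_combo (E : Finset (Finset (Fin N)))
    (hsing : ∀ i : Fin N, ({i} : Finset (Fin N)) ∈ E)
    (v : Finset (Fin N) → ℝ) (hv : ∀ e ∈ E, 0 < v e)
    {a b ρ1 ρ2 : ℝ} {y1 y2 : {e // e ∈ E} → ℝ} (ha : 0 ≤ a) (hb : 0 ≤ b) (i : Fin N) :
    a * Ub E hsing v ρ1 y1 i + b * Ub E hsing v ρ2 y2 i
      ≤ Ub E hsing v (a * ρ1 + b * ρ2) (a • y1 + b • y2) i := by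
  unfold Ub
  simp only [Pi.add_apply, Pi.smul_apply, smul_eq_mul]
  have hmain : ∑ e ∈ E.attach,
        (a * (if i ∈ e.1 then v e.1 * y1 e else v e.1 * min (y1 ⟨{i}, hsing i⟩) (y1 e))
          + b * (if i ∈ e.1 then v e.1 * y2 e
            else v e.1 * min (y2 ⟨{i}, hsing i⟩) (y2 e)))
      ≤ ∑ e ∈ E.attach,
      (if i ∈ e.1 then v e.1 * (a * y1 e + b * y2 e)
        else v e.1 * min (a * y1 ⟨{i}, hsing i⟩ + b * y2 ⟨{i}, hsing i⟩)
          (a * y1 e + b * y2 e)) := by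
    apply Finset.sum_le_sum
    intro e _
    by_cases hie : i ∈ e.1
    · simp only [if_pos hie]; nlinarith [hv e.1 e.2]
    · simp only [if_neg hie]
      calc a * (v e.1 * min (y1 ⟨{i}, hsing i⟩) (y1 e))
              + b * (v e.1 * min (y2 ⟨{i}, hsing i⟩) (y2 e))
          = v e.1 * (a * min (y1 ⟨{i}, hsing i⟩) (y1 e)
              + b * min (y2 ⟨{i}, hsing i⟩) (y2 e)) := by ring
        _ ≤ v e.1 * min (a * y1 ⟨{i}, hsing i⟩ + b * y2 ⟨{i}, hsing i⟩)
              (a * y1 e + b * y2 e) :=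
            mul_le_mul_of_nonneg_left (min_combo ha hb) (hv e.1 e.2).le
  rw [Finset.sum_add_distrib, ← Finset.mul_sum, ← Finset.mul_sum] at hmain
  linarith [hmain]

lemma S_convex (E : Finset (Finset (Fin N)))
    (hsing : ∀ i : Fin N, ({i} : Finset (Fin N)) ∈ E)
    (v : Finset (Fin N) → ℝ) (hv : ∀ e ∈ E, 0 < v e)
    (R : Set ({e // e ∈ E} → ℝ)) (hRcvx : Convex ℝ R) :
    Convex ℝ {p : ℝ × ({e // e ∈ E} → ℝ) |
        ∃ x : Fin N → ℝ, (∀ i, x i ∈ Set.Icc (0 : ℝ) 1) ∧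
          (p.1, p.2, x) ∈ persSystem E hsing v R} := by
  rintro p ⟨xp, hxp, h0p, ⟨zp, hzp, hyzp⟩, hcp, hLUp⟩ q ⟨xq, hxq, h0q, ⟨zq, hzq, hyzq⟩, hcq, hLUq⟩
    a b ha hb hab
  dsimp only at h0p hyzp hcp hLUp h0q hyzq hcq hLUq
  refine ⟨fun i => a * xp i + b * xq i, ?_, ?_, ?_, ?_, ?_⟩
  · intro i
    obtain ⟨h1, h2⟩ := hxp i
    obtain ⟨h3, h4⟩ := hxq i
    constructor
    · show (0:ℝ) ≤ a * xp i + b * xq i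
      nlinarith
    · show a * xp i + b * xq i ≤ 1
      nlinarith
  · show (0:ℝ) ≤ (a • p + b • q).1
    simp only [Prod.fst_add, Prod.smul_fst, smul_eq_mul]
    nlinarith
  · show ∃ z ∈ R, (a • p + b • q).2 = (a • p + b • q).1 • z
    simp only [Prod.fst_add, Prod.smul_fst, Prod.snd_add, Prod.smul_snd, smul_eq_mul]
    rcases eq_or_lt_of_le (by nlinarith : (0:ℝ) ≤ a * p.1 + b * q.1) with hz0 | hρ
    · refine ⟨zp, hzp, funext fun e => ?_⟩
      have hap : a * p.1 = 0 := by nlinarith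
      have hbq : b * q.1 = 0 := by nlinarith
      simp only [Pi.add_apply, Pi.smul_apply, smul_eq_mul, hyzp, hyzq]
      linear_combination (zq e - zp e) * hbq
    · refine ⟨(a * p.1 / (a * p.1 + b * q.1)) • zp + (b * q.1 / (a * p.1 + b * q.1)) • zq,
        hRcvx hzp hzq (by positivity) (by positivity) (by field_simp), funext fun e => ?_⟩
      simp only [Pi.add_apply, Pi.smul_apply, smul_eq_mul, hyzp, hyzq]
      field_simp
  · show (a • p + b • q).1 + ∑ e ∈ E.attach, v e.1 * (a • p + b • q).2 e = 1
    simp only [Prod.fst_add, Prod.smul_fst, Prod.snd_add, Prod.smul_snd, smul_eq_mul,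
      Pi.add_apply, Pi.smul_apply]
    have hsplit : ∑ e ∈ E.attach, v e.1 * (a * p.2 e + b * q.2 e)
        = a * ∑ e ∈ E.attach, v e.1 * p.2 e + b * ∑ e ∈ E.attach, v e.1 * q.2 e := by
      rw [Finset.mul_sum, Finset.mul_sum, ← Finset.sum_add_distrib]
      exact Finset.sum_congr rfl fun e _ => by ring
    rw [hsplit]
    linear_combination a * hcp + b * hcq + hab
  · intro i
    show Lb E hsing v (a • p + b • q).1 (a • p + b • q).2 i ≤ a * xp i + b * xq i ∧
      a * xp i + b * xq i ≤ Ub E hsing v (a • p + b • q).1 (a • p + b • q).2 i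
    simp only [Prod.fst_add, Prod.smul_fst, Prod.snd_add, Prod.smul_snd, smul_eq_mul]
    constructor
    · refine le_trans (Lb_combo E hsing v hv ha hb i) ?_
      have := (hLUp i).1
      have := (hLUq i).1
      nlinarith
    · refine le_trans ?_ (Ub_combo E hsing v hv ha hb i)
      have := (hLUp i).2
      have := (hLUq i).2
      nlinarith

lemma choice_subset_S (E : Finset (Finset (Fin N)))
    (hsing : ∀ i : Fin N, ({i} : Finset (Fin N)) ∈ E)
    (v : Finset (Fin N) → ℝ) (hv : ∀ e ∈ E, 0 < v e)
    (R : Set ({e // e ∈ E} → ℝ)) (hMGR : monoSet E ⊆ R) :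
    choiceSet E v ⊆ {p : ℝ × ({e // e ∈ E} → ℝ) |
        ∃ x : Fin N → ℝ, (∀ i, x i ∈ Set.Icc (0 : ℝ) 1) ∧
          (p.1, p.2, x) ∈ persSystem E hsing v R} := by
  rintro p ⟨x, hx, hρ, hy⟩
  have hD := Dx_pos hv hx
  have hy' : p.2 = fun e => (∏ i ∈ e.1, x i) / Dx E v x := funext hy
  refine ⟨x, fun i => by rcases hx i with h | h <;> simp [h], ?_, ?_, ?_, ?_⟩
  · show (0:ℝ) ≤ p.1
    rw [hρ]; positivity
  · refine ⟨fun e => ∏ i ∈ e.1, x i, hMGR ⟨x, hx, fun _ => rfl⟩, funext fun e => ?_⟩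
    simp only [Pi.smul_apply, smul_eq_mul, hy e, hρ]
    ring
  · show p.1 + ∑ e ∈ E.attach, v e.1 * p.2 e = 1
    rw [hρ]
    have : ∑ e ∈ E.attach, v e.1 * p.2 e = (Dx E v x - 1) / Dx E v x := by
      have h1 : ∑ e ∈ E.attach, v e.1 * p.2 e
          = ∑ e ∈ E.attach, (v e.1 * ∏ i ∈ e.1, x i) / Dx E v x :=
        Finset.sum_congr rfl fun e _ => by rw [hy e]; ring
      rw [h1, ← Finset.sum_div, Finset.sum_attach E (fun c => v c * ∏ i ∈ c, x i)]
      congr 1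
      unfold Dx; ring
    rw [this]
    field_simp
    ring
  · intro i
    rw [hρ, hy']
    rw [Lb_vertex E hsing v hv hx i, Ub_vertex E hsing v hv hx i]
    exact ⟨le_rfl, le_rfl⟩

/-- **Theorem 1 (local sharpness part).** If `R ⊆ [0,1]^E` is compact, convex, contains `M_G`
and has all its extreme points in `M_G` (an integral relaxation oracle), then the projection
onto the `(ρ,y)`-coordinates of the triples `(ρ,y,x)` in the perspective system with
`x ∈ [0,1]^V` equals the convex hull of the choice probability set `C_G`. -/
theorem perspective_formulation_locally_sharp
    (N : ℕ) (hN : 1 ≤ N)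
    (E : Finset (Finset (Fin N)))
    (hne : ∀ e ∈ E, e.Nonempty)
    (hsing : ∀ i : Fin N, ({i} : Finset (Fin N)) ∈ E)
    (v : Finset (Fin N) → ℝ) (hv : ∀ e ∈ E, 0 < v e)
    (R : Set ({e // e ∈ E} → ℝ))
    (hR01 : ∀ z ∈ R, ∀ e : {e // e ∈ E}, z e ∈ Set.Icc (0 : ℝ) 1)
    (hRcpt : IsCompact R) (hRcvx : Convex ℝ R)
    (hMGR : monoSet E ⊆ R)
    (hext : Set.extremePoints ℝ R ⊆ monoSet E) :
    {p : ℝ × ({e // e ∈ E} → ℝ) |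
        ∃ x : Fin N → ℝ, (∀ i, x i ∈ Set.Icc (0 : ℝ) 1) ∧
          (p.1, p.2, x) ∈ persSystem E hsing v R}
      = convexHull ℝ (choiceSet E v) := by
  apply Set.Subset.antisymm
  · -- projection ⊆ convex hull
    rintro p ⟨x, hx01, h0p, ⟨z, hzR, hyz⟩, hconstr, hLU⟩
    dsimp only at h0p hyz hconstr hLU
    -- ρ > 0
    have hρ : 0 < p.1 := by
      rcases h0p.lt_or_eq with h | h
      · exact h
      · exfalso
        have hsum : ∑ e ∈ E.attach, v e.1 * p.2 e = 0 :=
          Finset.sum_eq_zero fun e _ => by rw [hyz, ← h]; simp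
        rw [hsum, ← h] at hconstr
        norm_num at hconstr
    -- M_G is finite
    have hMfin : (monoSet E).Finite := by
      have himg : monoSet E ⊆ (fun x : Fin N → ℝ => fun e : {e // e ∈ E} => ∏ i ∈ e.1, x i) ''
          (Set.pi Set.univ fun _ : Fin N => ({0, 1} : Set ℝ)) := by
        rintro w ⟨x', hx', hw⟩
        exact ⟨x', fun i _ => by rcases hx' i with h | h <;> simp [h], (funext hw).symm⟩
      exact (Set.Finite.image _
        (Set.Finite.pi fun _ => (Set.finite_singleton 1).insert 0)).subset himg
    -- R ⊆ conv(M_G)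
    have hRconv : R ⊆ convexHull ℝ (monoSet E) := by
      have h1 : closure (convexHull ℝ (R.extremePoints ℝ)) = R :=
        closure_convexHull_extremePoints hRcpt hRcvx
      intro u hu
      rw [← h1] at hu
      have h2 : closure (convexHull ℝ (R.extremePoints ℝ))
          ⊆ closure (convexHull ℝ (monoSet E)) := closure_mono (convexHull_mono hext)
      have h3 : closure (convexHull ℝ (monoSet E)) = convexHull ℝ (monoSet E) :=
        (hMfin.isClosed_convexHull (𝕜 := ℝ)).closure_eq
      exact h3 ▸ h2 hu
    have hz' : z ∈ convexHull ℝ (monoSet E) := hRconv hzR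
    rw [_root_.convexHull_eq] at hz'
    obtain ⟨ι, t, w, f, hw0, hw1, hfM, hcent⟩ := hz'
    have hzdef : ∀ e, z e = ∑ k ∈ t, w k * f k e := by
      intro e
      rw [← hcent, Finset.centerMass_eq_of_sum_1 _ _ hw1]
      simp [Finset.sum_apply]
    set D : ι → ℝ := fun k => 1 + ∑ e ∈ E.attach, v e.1 * f k e with hDdef
    have hDx : ∀ k ∈ t, ∃ xk : Fin N → ℝ, IsBinaryVec xk ∧
        (∀ e : {e // e ∈ E}, f k e = ∏ i ∈ e.1, xk i) ∧ D k = Dx E v xk := by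
      intro k hk
      obtain ⟨xk, hxk, hfk⟩ := hfM k hk
      refine ⟨xk, hxk, hfk, ?_⟩
      rw [hDdef]
      dsimp only
      unfold Dx
      congr 1
      rw [← Finset.sum_attach E (fun c => v c * ∏ i ∈ c, xk i)]
      exact Finset.sum_congr rfl fun e _ => by rw [hfk e]
    have hDpos : ∀ k ∈ t, 0 < D k := by
      intro k hk
      obtain ⟨xk, hxk, _, hDk⟩ := hDx k hk
      rw [hDk]
      exact Dx_pos hv hxk
    set μ : ι → ℝ := fun k => w k * p.1 * D k with hμdef
    set P : ι → ℝ × ({e // e ∈ E} → ℝ) := fun k => (1 / D k, (1 / D k) • f k) with hPdef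
    have hμ0 : ∀ k ∈ t, 0 ≤ μ k := fun k hk =>
      mul_nonneg (mul_nonneg (hw0 k hk) hρ.le) (hDpos k hk).le
    have hμ1 : ∑ k ∈ t, μ k = 1 := by
      have key : ∑ k ∈ t, μ k = p.1 + ∑ e ∈ E.attach, v e.1 * p.2 e := by
        calc ∑ k ∈ t, μ k
            = ∑ k ∈ t, (w k * p.1 + ∑ e ∈ E.attach, v e.1 * (p.1 * (w k * f k e))) := by
              refine Finset.sum_congr rfl fun k _ => ?_
              rw [hμdef, hDdef]
              dsimp only
              rw [mul_add, mul_one, Finset.mul_sum]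
              congr 1
              exact Finset.sum_congr rfl fun e _ => by ring
          _ = (∑ k ∈ t, w k * p.1)
              + ∑ e ∈ E.attach, ∑ k ∈ t, v e.1 * (p.1 * (w k * f k e)) := by
              rw [Finset.sum_add_distrib, Finset.sum_comm]
          _ = p.1 + ∑ e ∈ E.attach, v e.1 * p.2 e := by
              congr 1
              · rw [← Finset.sum_mul, hw1, one_mul]
              · refine Finset.sum_congr rfl fun e _ => ?_
                rw [← Finset.mul_sum, ← Finset.mul_sum, ← hzdef e, hyz]
                simp
      rw [key, hconstr]
    have hPC : ∀ k ∈ t, P k ∈ choiceSet E v := by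
      intro k hk
      obtain ⟨xk, hxk, hfk, hDk⟩ := hDx k hk
      refine ⟨xk, hxk, ?_, fun e => ?_⟩
      · rw [hPdef]; dsimp only; rw [hDk]
      · rw [hPdef]; dsimp only
        simp only [Pi.smul_apply, smul_eq_mul]
        rw [hfk e, hDk]
        ring
    have heq : p = t.centerMass μ P := by
      rw [Finset.centerMass_eq_of_sum_1 _ _ hμ1]
      apply Prod.ext
      · rw [Prod.fst_sum]
        have hterm : ∀ k ∈ t, (μ k • P k).1 = w k * p.1 := by
          intro k hk
          rw [hPdef, hμdef]
          dsimp only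
          simp only [Prod.smul_fst, smul_eq_mul]
          field_simp [(hDpos k hk).ne']
        rw [Finset.sum_congr rfl hterm, ← Finset.sum_mul, hw1, one_mul]
      · rw [Prod.snd_sum]
        funext e
        rw [Finset.sum_apply]
        have hterm : ∀ k ∈ t, (μ k • P k).2 e = w k * (p.1 * f k e) := by
          intro k hk
          rw [hPdef, hμdef]
          dsimp only
          simp only [Prod.smul_snd, Pi.smul_apply, smul_eq_mul]
          field_simp [(hDpos k hk).ne']
        rw [Finset.sum_congr rfl hterm, hyz]
        simp only [Pi.smul_apply, smul_eq_mul]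
        rw [hzdef e, Finset.mul_sum]
        exact Finset.sum_congr rfl fun k _ => by ring
    rw [heq]
    exact Finset.centerMass_mem_convexHull t hμ0 (by rw [hμ1]; norm_num) hPC
  · exact convexHull_min (choice_subset_S E hsing v hv R hMGR)
      (S_convex E hsing v hv R hRcvx)
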